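/- arXiv:1908.00760 — 3 statements merged into one kernel-verified Lean document; each statement's English description precedes it below -/
import Mathlib

section
/- There are no integers q0 ≥ 3, g ∈ {2,4}, λ ≥ 1 and n ∈ {1,2} satisfying n·λ·(q0^g - 2) = (q0-2)(q0^2-q0-1)(q0^2-q0-3). -/
theorem stmt_11 :
    ¬ ∃ (q0 l n : ℤ) (g : ℕ), 3 ≤ q0 ∧ (g = 2 ∨ g = 4) ∧ 1 ≤ l ∧ (n = 1 ∨ n = 2) ∧
      n * l * (q0 ^ g - 2) = (q0 - 2) * (q0 ^ 2 - q0 - 1) * (q0 ^ 2 - q0 - 3) := by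
  rintro ⟨q0, l, n, g, hq, hg, hl, hn, heq⟩
  have hn1 : 1 ≤ n := by rcases hn with h | h <;> omega
  rcases hg with rfl | rfl
  · -- g = 2
    have hdvd : (q0 ^ 2 - 2) ∣ (q0 - 2) :=
      ⟨n * l - q0 ^ 3 + 4 * q0 ^ 2 - 3 * q0 - 2, by linear_combination -heq⟩
    have hle := Int.le_of_dvd (by linarith) hdvd
    nlinarith
  · -- g = 4
    rcases lt_or_ge q0 4 with h4 | h4
    · have hq3 : q0 = 3 := by omega
      subst hq3
      norm_num at heq
      have h1 : 1 ≤ n * l := by nlinarith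
      nlinarith
    · have hdvd : (q0 ^ 4 - 2) ∣ (q0 ^ 3 + 10 * q0 ^ 2 - 3 * q0 - 14) :=
        ⟨n * l - q0 + 4, by linear_combination -heq⟩
      have hle := Int.le_of_dvd (by nlinarith) hdvd
      have h12 : 0 ≤ q0 ^ 2 - q0 - 12 := by nlinarith
      nlinarith [mul_nonneg (sq_nonneg q0) h12]
end

section
/- For an integer q0 ≥ 2, q0^3 - 2 divides (q0^3-q0-1)(q0^3-q0-2)(q0^3-q0-3) if and only if q0 = 2. -/
theorem stmt_16 (q0 : ℤ) (h : 2 ≤ q0) :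
    (q0 ^ 3 - 2 ∣ (q0 ^ 3 - q0 - 1) * (q0 ^ 3 - q0 - 2) * (q0 ^ 3 - q0 - 3)) ↔
      q0 = 2 := by
  constructor
  · intro hd
    have hd2 : q0 ^ 3 - 2 ∣ q0 - 2 := by
      have key : (q0 ^ 3 - q0 - 1) * (q0 ^ 3 - q0 - 2) * (q0 ^ 3 - q0 - 3)
          - (q0 ^ 3 - 2) * (q0 ^ 6 - 3 * q0 ^ 4 - 4 * q0 ^ 3 + 3 * q0 ^ 2 + 6 * q0 + 2)
          = q0 - 2 := by ring
      have := dvd_sub hd (Dvd.intro (q0 ^ 6 - 3 * q0 ^ 4 - 4 * q0 ^ 3 + 3 * q0 ^ 2 + 6 * q0 + 2) rfl)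
      rwa [key] at this
    by_contra hne
    have h3 : 3 ≤ q0 := lt_of_le_of_ne h (Ne.symm hne)
    have hpos : 0 < q0 - 2 := by omega
    have hle := Int.le_of_dvd hpos hd2
    nlinarith [sq_nonneg q0]
  · rintro rfl
    decide
end

section
/- There are no integers f ≥ 1 and c ≥ 4 satisfying 6·(2^f - 2) = (c-1)(c-2)(c-3). -/
/-- Any odd prime dividing `3 * (2^m + 1)`, where `m` is odd or a positive
multiple of `4`, is congruent to `1` or `3` mod `8`. -/
lemma prime_mod8 (p m : ℕ) (hp : p.Prime)
    (hm : m % 2 = 1 ∨ (m % 4 = 0 ∧ m ≠ 0)) (hdvd : p ∣ 3 * (2 ^ m + 1)) :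
    p % 8 = 1 ∨ p % 8 = 3 := by
  rcases eq_or_ne p 3 with rfl | hp3
  · right; rfl
  have hm1 : 1 ≤ m := by omega
  have hp2 : p ≠ 2 := by
    rintro rfl
    obtain ⟨m', rfl⟩ : ∃ m', m = m' + 1 := ⟨m - 1, by omega⟩
    rw [pow_succ] at hdvd
    omega
  haveI : Fact p.Prime := ⟨hp⟩
  haveI : Fact (2 < p) := ⟨by have := hp.two_le; omega⟩
  have hdvd2 : p ∣ 2 ^ m + 1 := by
    rcases (Nat.Prime.dvd_mul hp).mp hdvd with h | h
    · exact absurd ((Nat.prime_dvd_prime_iff_eq hp Nat.prime_three).mp h) hp3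
    · exact h
  have hcast : (2 : ZMod p) ^ m = -1 := by
    have h0 : ((2 ^ m + 1 : ℕ) : ZMod p) = 0 :=
      (ZMod.natCast_eq_zero_iff _ _).mpr hdvd2
    push_cast at h0
    linear_combination h0
  rcases hm with hmo | ⟨hm4, hm0⟩
  · -- m odd : -2 is a square mod p
    have hsq : IsSquare (-2 : ZMod p) := by
      refine ⟨2 ^ ((m + 1) / 2), ?_⟩
      have h2 : (m + 1) / 2 + (m + 1) / 2 = m + 1 := by omega
      calc (-2 : ZMod p) = 2 ^ m * 2 := by rw [hcast]; ring
        _ = 2 ^ (m + 1) := by rw [pow_succ]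
        _ = 2 ^ ((m + 1) / 2) * 2 ^ ((m + 1) / 2) := by rw [← pow_add, h2]
    exact (ZMod.exists_sq_eq_neg_two_iff hp2).mp hsq
  · -- 4 ∣ m : 2^(m/4) has order 8, so 8 ∣ p - 1
    left
    obtain ⟨j, rfl⟩ : ∃ j, m = 4 * j := ⟨m / 4, by omega⟩
    set x : ZMod p := 2 ^ j with hx
    have hx4 : x ^ 4 = -1 := by
      rw [hx, ← pow_mul, mul_comm]; exact hcast
    have hne : (-1 : ZMod p) ≠ 1 := ZMod.neg_one_ne_one
    have hx8 : x ^ 8 = 1 := by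
      have : x ^ 8 = (x ^ 4) ^ 2 := by ring
      rw [this, hx4, neg_one_sq]
    have ho8 : orderOf x ∣ 8 := orderOf_dvd_of_pow_eq_one hx8
    have ho4 : ¬ orderOf x ∣ 4 := by
      intro h
      have h1 : x ^ 4 = 1 := orderOf_dvd_iff_pow_eq_one.mp h
      rw [hx4] at h1
      exact hne h1
    have ho : orderOf x = 8 := by
      have ho8' : orderOf x ∣ 2 ^ 3 := by norm_num at ho8 ⊢; exact ho8
      obtain ⟨i, hi, hoi⟩ := (Nat.dvd_prime_pow Nat.prime_two).mp ho8'
      interval_cases i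
      · exfalso; exact ho4 (by rw [hoi]; norm_num)
      · exfalso; exact ho4 (by rw [hoi]; norm_num)
      · exfalso; exact ho4 (by rw [hoi]; norm_num)
      · rw [hoi]; norm_num
    have hxne : x ≠ 0 := by
      intro h
      rw [h] at hx4
      have : (0 : ZMod p) = -1 := by rw [← hx4]; norm_num
      have : (-1 : ZMod p) = 0 := this.symm
      rw [neg_eq_zero] at this
      exact one_ne_zero this
    have hdv : (8 : ℕ) ∣ p - 1 := ho ▸ ZMod.orderOf_dvd_card_sub_one hxne
    have := hp.two_le
    omega

/-- If every prime factor of `N` is `1` or `3` mod `8`, then so is every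
nonzero divisor of `N`. -/
lemma divisor_mod8 (N : ℕ) (hN : ∀ p, p.Prime → p ∣ N → p % 8 = 1 ∨ p % 8 = 3) :
    ∀ n, n ≠ 0 → n ∣ N → n % 8 = 1 ∨ n % 8 = 3 := by
  intro n
  induction n using Nat.strong_induction_on with
  | _ n ih =>
    intro hn0 hnN
    rcases eq_or_ne n 1 with rfl | hn1
    · left; rfl
    have hp := Nat.minFac_prime hn1
    have hpd : n.minFac ∣ n := Nat.minFac_dvd n
    have hqd : n / n.minFac ∣ n := ⟨n.minFac, (Nat.div_mul_cancel hpd).symm⟩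
    have hq : n / n.minFac ∣ N := hqd.trans hnN
    have hqn : n / n.minFac < n := Nat.div_lt_self (Nat.pos_of_ne_zero hn0) hp.one_lt
    have hq0 : n / n.minFac ≠ 0 := by
      intro h
      have h2 : n / n.minFac * n.minFac = n := Nat.div_mul_cancel hpd
      rw [h, zero_mul] at h2
      exact hn0 h2.symm
    have h1 := ih _ hqn hq0 hq
    have h2 := hN _ hp (hpd.trans hnN)
    have hmm : n % 8 = (n / n.minFac % 8) * (n.minFac % 8) % 8 := by
      conv_lhs => rw [← Nat.div_mul_cancel hpd]
      rw [Nat.mul_mod]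
    rcases h1 with h1 | h1 <;> rcases h2 with h2 | h2 <;>
      rw [h1, h2] at hmm <;> omega

set_option maxRecDepth 100000 in
set_option maxHeartbeats 2000000 in
theorem stmt_19 :
    ¬ ∃ (f : ℕ) (c : ℤ), 1 ≤ f ∧ 4 ≤ c ∧
      6 * ((2 : ℤ) ^ f - 2) = (c - 1) * (c - 2) * (c - 3) := by
  rintro ⟨f, c, hf, hc, heq⟩
  by_cases hc12 : c ≤ 12
  · -- small c : brute force
    have hA : (c - 1) * (c - 2) ≤ 110 := by
      nlinarith [mul_nonneg (by linarith : (0:ℤ) ≤ 11 - (c - 1)) (by linarith : (0:ℤ) ≤ c - 2)]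
    have hub : (c - 1) * (c - 2) * (c - 3) ≤ 990 := by
      nlinarith [mul_nonneg (by linarith : (0:ℤ) ≤ 110 - (c - 1) * (c - 2)) (by linarith : (0:ℤ) ≤ c - 3)]
    have hf7 : f ≤ 7 := by
      by_contra h
      push_neg at h
      have h2 : (2:ℤ) ^ 8 ≤ 2 ^ f := pow_le_pow_right₀ (by norm_num) (by omega)
      norm_num at h2
      linarith
    interval_cases f <;> interval_cases c <;> norm_num at heq
  · push_neg at hc12  -- 13 ≤ c
    have hAB : 132 ≤ (c - 1) * (c - 2) := by
      nlinarith [mul_nonneg (by linarith : (0:ℤ) ≤ (c - 1) - 12) (by linarith : (0:ℤ) ≤ (c - 2) - 11)]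
    have hlb : 1320 ≤ (c - 1) * (c - 2) * (c - 3) := by
      nlinarith [mul_nonneg (by linarith : (0:ℤ) ≤ (c - 1) * (c - 2) - 132) (by linarith : (0:ℤ) ≤ (c - 3) - 10)]
    have hf8 : 8 ≤ f := by
      by_contra h
      push_neg at h
      have h2 : (2:ℤ) ^ f ≤ 2 ^ 7 := pow_le_pow_right₀ (by norm_num) (by omega)
      norm_num at h2
      linarith
    obtain ⟨k, rfl⟩ : ∃ k, f = k + 1 := ⟨f - 1, by omega⟩
    have hk : 7 ≤ k := by omega
    have heq' : 12 * ((2:ℤ) ^ k - 1) = (c - 1) * (c - 2) * (c - 3) := by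
      rw [pow_succ] at heq
      linear_combination heq
    -- Determine c mod 512
    have h512 : ((c : ZMod 512)) = 206 := by
      have hcast := congrArg (Int.cast : ℤ → ZMod 512) heq'
      push_cast at hcast
      obtain ⟨j, hj⟩ : ∃ j, k = j + 7 := ⟨k - 7, by omega⟩
      rw [hj, pow_add] at hcast
      have h0 : (12 : ZMod 512) * ((2:ZMod 512) ^ j * 2 ^ 7 - 1) = -12 := by
        have h1536 : (1536 : ZMod 512) = 0 := by decide
        linear_combination ((2:ZMod 512) ^ j) * h1536
      rw [h0] at hcast
      have huniq : ∀ x : ZMod 512, (x - 1) * (x - 2) * (x - 3) = -12 → x = 206 := by decide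
      exact huniq _ hcast.symm
    have hdvd512 : (512 : ℤ) ∣ c - 206 := by
      have h0 : ((c - 206 : ℤ) : ZMod 512) = 0 := by push_cast; rw [h512]; norm_num
      exact_mod_cast (ZMod.intCast_zmod_eq_zero_iff_dvd _ 512).mp h0
    obtain ⟨m, hm⟩ := hdvd512
    have hm0 : 0 ≤ m := by omega
    obtain ⟨M, hM⟩ : ∃ M : ℕ, m = (M : ℤ) := ⟨m.toNat, (Int.toNat_of_nonneg hm0).symm⟩
    have hcd : c = 512 * (M : ℤ) + 206 := by rw [hM] at hm; omega
    rw [hcd] at heq'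
    obtain ⟨j2, rfl⟩ : ∃ j2, k = j2 + 2 := ⟨k - 2, by omega⟩
    have hj2 : 5 ≤ j2 := by omega
    -- divisibility 1 : (4d+3) ∣ 3*(2^k + 1)  with d = 128M + 51
    have div1 : (512 * M + 207 : ℕ) ∣ 3 * (2 ^ (j2 + 2) + 1) := by
      rw [← Int.natCast_dvd_natCast]
      push_cast
      refine ⟨4 * (128 * (M:ℤ) + 51) ^ 2 - 3 * (128 * (M:ℤ) + 51) + 2, ?_⟩
      have h4 : (4:ℤ) * (3 * (2 ^ (j2 + 2) + 1)) =
          4 * ((512 * (M:ℤ) + 207) *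
            (4 * (128 * (M:ℤ) + 51) ^ 2 - 3 * (128 * (M:ℤ) + 51) + 2)) := by
        linear_combination heq'
      linarith
    -- divisibility 2 : (32M+13) ∣ 3*(2^j2 + 1)   (note 4*(32M+13) = d + 1)
    have div2 : (32 * M + 13 : ℕ) ∣ 3 * (2 ^ j2 + 1) := by
      rw [← Int.natCast_dvd_natCast]
      push_cast
      refine ⟨16 * (128 * (M:ℤ) + 51) ^ 2 - 16 * (128 * (M:ℤ) + 51) + 15, ?_⟩
      have h16 : (16:ℤ) * (3 * (2 ^ j2 + 1)) =
          16 * ((32 * (M:ℤ) + 13) *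
            (16 * (128 * (M:ℤ) + 51) ^ 2 - 16 * (128 * (M:ℤ) + 51) + 15)) := by
        linear_combination heq'
      linarith
    -- now the quadratic-residue contradiction
    have hcases : (j2 + 2) % 4 = 0 ∨ j2 % 2 = 1 ∨ (j2 % 4 = 0 ∧ j2 ≠ 0) := by omega
    rcases hcases with h | h
    · -- use div1 with m = j2 + 2, divisible by 4
      have hkey := divisor_mod8 (3 * (2 ^ (j2 + 2) + 1))
        (fun p hp hpd => prime_mod8 p (j2 + 2) hp (Or.inr ⟨h, by omega⟩) hpd)
        (512 * M + 207) (by omega) div1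
      omega
    · -- use div2 with m = j2, odd or divisible by 4
      have hkey := divisor_mod8 (3 * (2 ^ j2 + 1))
        (fun p hp hpd => prime_mod8 p j2 hp h hpd)
        (32 * M + 13) (by omega) div2
      omega
end
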